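/- If g is a non-degenerate symmetric bilinear form on a finite-dimensional complex vector space V and A is a g-skew endomorphism, then g restricts to a non-degenerate pairing between the full generalised eigenspace D_α of A for eigenvalue α and the full generalised eigenspace D_{-α} for eigenvalue -α; in particular dim D_α = dim D_{-α}. -/

import Mathlib

open Module

/-- Orthogonality of generalized eigenvectors whose eigenvalues don't sum to zero. -/
lemma ortho_aux {V : Type*} [AddCommGroup V] [Module ℂ V]
    (g : LinearMap.BilinForm ℂ V)
    (A : V →ₗ[ℂ] V) (hskew : ∀ u v : V, g (A u) v = - g u (A v))
    {β γ : ℂ} (hbg : β + γ ≠ 0) :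
    ∀ N k l : ℕ, k + l ≤ N → ∀ u v : V,
      ((A - β • (1 : Module.End ℂ V)) ^ k) u = 0 →
      ((A - γ • (1 : Module.End ℂ V)) ^ l) v = 0 → g u v = 0 := by
  intro N
  induction N with
  | zero =>
    intro k l hkl u v hu hv
    obtain ⟨rfl, rfl⟩ : k = 0 ∧ l = 0 := by omega
    simp only [pow_zero, Module.End.one_apply] at hu
    simp [hu]
  | succ N ih =>
    intro k l hkl u v hu hv
    rcases Nat.eq_zero_or_pos k with rfl | hk
    · simp only [pow_zero, Module.End.one_apply] at hu; simp [hu]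
    rcases Nat.eq_zero_or_pos l with rfl | hl
    · simp only [pow_zero, Module.End.one_apply] at hv; simp [hv]
    have hu' : ((A - β • (1 : Module.End ℂ V)) ^ (k-1)) ((A - β • (1 : Module.End ℂ V)) u) = 0 := by
      rw [← Module.End.mul_apply, ← pow_succ]
      have : k - 1 + 1 = k := by omega
      rw [this]; exact hu
    have hv' : ((A - γ • (1 : Module.End ℂ V)) ^ (l-1)) ((A - γ • (1 : Module.End ℂ V)) v) = 0 := by
      rw [← Module.End.mul_apply, ← pow_succ]
      have : l - 1 + 1 = l := by omega
      rw [this]; exact hv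
    have h1 : g ((A - β • (1 : Module.End ℂ V)) u) v = 0 := ih (k-1) l (by omega) _ _ hu' hv
    have h2 : g u ((A - γ • (1 : Module.End ℂ V)) v) = 0 := ih k (l-1) (by omega) _ _ hu hv'
    have e1 : g ((A - β • (1 : Module.End ℂ V)) u) v
        = - g u (A v) - β * g u v := by
      simp only [LinearMap.sub_apply, LinearMap.smul_apply, Module.End.one_apply,
        map_sub, map_smul, LinearMap.sub_apply, LinearMap.smul_apply, hskew u v]
      ring_nf
    have e2 : g u ((A - γ • (1 : Module.End ℂ V)) v) = g u (A v) - γ * g u v := by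
      simp only [LinearMap.sub_apply, LinearMap.smul_apply, Module.End.one_apply,
        map_sub, map_smul, smul_eq_mul, Module.End.one_apply]
    have : (β + γ) * g u v = 0 := by
      have := h1
      rw [e1] at this
      rw [e2] at h2
      linear_combination -this - h2
    rcases mul_eq_zero.mp this with h | h
    · exact absurd h hbg
    · exact h

/-- One-sided nondegeneracy on generalized eigenspaces. -/
lemma nondeg_aux {V : Type*} [AddCommGroup V] [Module ℂ V] [FiniteDimensional ℂ V]
    (g : LinearMap.BilinForm ℂ V)
    (hnd : ∀ u : V, (∀ v : V, g u v = 0) → u = 0)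
    (A : V →ₗ[ℂ] V) (hskew : ∀ u v : V, g (A u) v = - g u (A v))
    (μ : ℂ) (u : V)
    (hu : ((A - μ • (1 : Module.End ℂ V)) ^ (finrank ℂ V)) u = 0)
    (h : ∀ v : V, ((A - (-μ) • (1 : Module.End ℂ V)) ^ (finrank ℂ V)) v = 0 → g u v = 0) :
    u = 0 := by
  apply hnd
  have htop : ⊤ ≤ LinearMap.ker (g u) := by
    rw [← Module.End.iSup_maxGenEigenspace_eq_top A]
    apply iSup_le
    intro β v hv
    rw [Module.End.maxGenEigenspace_eq_genEigenspace_finrank,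
      Module.End.genEigenspace_nat, LinearMap.mem_ker] at hv
    rcases eq_or_ne β (-μ) with rfl | hβ
    · exact h v hv
    · have hsum : μ + β ≠ 0 := fun hc => hβ (by linear_combination hc)
      exact ortho_aux g A hskew hsum (finrank ℂ V + finrank ℂ V) _ _ le_rfl u v hu hv
  intro v
  exact htop (Submodule.mem_top) (x := v)

theorem stmt2 {V : Type*} [AddCommGroup V] [Module ℂ V] [FiniteDimensional ℂ V]
    (g : LinearMap.BilinForm ℂ V)
    (hsym : ∀ u v : V, g u v = g v u)
    (hnd : ∀ u : V, (∀ v : V, g u v = 0) → u = 0)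
    (A : V →ₗ[ℂ] V) (hskew : ∀ u v : V, g (A u) v = - g u (A v))
    (α : ℂ)
    (Dα Dnα : Submodule ℂ V)
    (hDα : Dα = LinearMap.ker ((A - α • (1 : Module.End ℂ V)) ^ (finrank ℂ V)))
    (hDnα : Dnα = LinearMap.ker ((A - (-α) • (1 : Module.End ℂ V)) ^ (finrank ℂ V))) :
    (∀ u ∈ Dα, u ≠ 0 → ∃ v ∈ Dnα, g u v ≠ 0) ∧
    (∀ v ∈ Dnα, v ≠ 0 → ∃ u ∈ Dα, g u v ≠ 0) ∧
    finrank ℂ Dα = finrank ℂ Dnα := by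
  subst hDα hDnα
  have part1 : ∀ u ∈ LinearMap.ker ((A - α • (1 : Module.End ℂ V)) ^ (finrank ℂ V)),
      u ≠ 0 → ∃ v ∈ LinearMap.ker ((A - (-α) • (1 : Module.End ℂ V)) ^ (finrank ℂ V)),
      g u v ≠ 0 := by
    intro u hu hne
    by_contra hc
    push_neg at hc
    exact hne (nondeg_aux g hnd A hskew α u hu (fun v hv => hc v hv))
  have part2 : ∀ v ∈ LinearMap.ker ((A - (-α) • (1 : Module.End ℂ V)) ^ (finrank ℂ V)),
      v ≠ 0 → ∃ u ∈ LinearMap.ker ((A - α • (1 : Module.End ℂ V)) ^ (finrank ℂ V)),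
      g u v ≠ 0 := by
    intro v hv hne
    by_contra hc
    push_neg at hc
    refine hne (nondeg_aux g hnd A hskew (-α) v hv (fun u hu => ?_))
    rw [hsym]
    have hu' : ((A - α • (1 : Module.End ℂ V)) ^ (finrank ℂ V)) u = 0 := by
      rwa [neg_neg] at hu
    exact hc u hu'
  refine ⟨part1, part2, ?_⟩
  -- dimension equality via injective maps into duals
  set Dα := LinearMap.ker ((A - α • (1 : Module.End ℂ V)) ^ (finrank ℂ V)) with hDα'
  set Dnα := LinearMap.ker ((A - (-α) • (1 : Module.End ℂ V)) ^ (finrank ℂ V)) with hDnα'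
  have hinj1 : Function.Injective (g.domRestrict₁₂ Dα Dnα) := by
    rw [← LinearMap.ker_eq_bot, eq_bot_iff]
    rintro ⟨u, hu⟩ h0
    simp only [LinearMap.mem_ker] at h0
    have : u = 0 := by
      by_contra hne
      obtain ⟨v, hv, hgv⟩ := part1 u hu hne
      exact hgv (by simpa [LinearMap.domRestrict₁₂_apply] using congrFun (congrArg DFunLike.coe h0) ⟨v, hv⟩)
    simpa [Submodule.mem_bot] using this
  have hinj2 : Function.Injective ((g.domRestrict₁₂ Dα Dnα).flip) := by
    rw [← LinearMap.ker_eq_bot, eq_bot_iff]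
    rintro ⟨v, hv⟩ h0
    simp only [LinearMap.mem_ker] at h0
    have : v = 0 := by
      by_contra hne
      obtain ⟨u, hu, hgu⟩ := part2 v hv hne
      exact hgu (by simpa [LinearMap.domRestrict₁₂_apply] using congrFun (congrArg DFunLike.coe h0) ⟨u, hu⟩)
    simpa [Submodule.mem_bot] using this
  have h1 : finrank ℂ Dα ≤ finrank ℂ Dnα := by
    have := LinearMap.finrank_le_finrank_of_injective hinj1
    rwa [Subspace.dual_finrank_eq] at this
  have h2 : finrank ℂ Dnα ≤ finrank ℂ Dα := by
    have := LinearMap.finrank_le_finrank_of_injective hinj2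
    rwa [Subspace.dual_finrank_eq] at this
  omega
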